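/- Let n ≥ 1 and x_1, …, x_n ∈ (0, 1/2], not all equal. Let A_n, G_n be the arithmetic and geometric means of the x_i, and A'_n, G'_n the arithmetic and geometric means of 1 - x_1, …, 1 - x_n. Then (A'_n/G'_n)^{A'_n + G'_n} < (A_n/G_n)^{A_n + G_n} and (A'_n/G'_n)^{A_n - G_n} < (A_n/G_n)^{A'_n - G'_n}. -/

import Mathlib

open Real Finset

-- (Lc) strict: for r > 1, 2(r-1)/(r+1) < log r
lemma lem_logr {r : ℝ} (h : 1 < r) : 2*(r-1)/(r+1) < Real.log r := by
  have key : StrictMonoOn (fun t : ℝ => Real.log t - 2*(t-1)/(t+1)) (Set.Ici 1) := by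
    apply strictMonoOn_of_deriv_pos (convex_Ici 1)
    · apply ContinuousOn.sub
      · exact fun t ht => (Real.continuousAt_log (by simp at ht; linarith)).continuousWithinAt
      · exact ContinuousOn.div (by fun_prop) (by fun_prop)
          (fun t ht => by simp at ht; intro h0; linarith)
    · intro t ht
      rw [interior_Ici] at ht
      simp only [Set.mem_Ioi] at ht
      have ht0 : (0:ℝ) < t := by linarith
      have ht1 : t + 1 ≠ 0 := by linarith
      have hd : HasDerivAt (fun t : ℝ => Real.log t - 2*(t-1)/(t+1))
          (1/t - (2*(t+1) - 2*(t-1)*1)/(t+1)^2) t := by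
        have h1 : HasDerivAt Real.log (1/t) t := by
          simpa [one_div] using Real.hasDerivAt_log (ne_of_gt ht0)
        have h2 : HasDerivAt (fun t : ℝ => 2*(t-1)) 2 t := by
          simpa using ((hasDerivAt_id t).sub_const 1).const_mul 2
        have h3 : HasDerivAt (fun t : ℝ => t+1) 1 t := by
          simpa using (hasDerivAt_id t).add_const 1
        exact h1.sub (h2.div h3 ht1)
      rw [hd.deriv]
      have h4 : (0:ℝ) < (t+1)^2 := by positivity
      rw [sub_pos, div_lt_div_iff₀ h4 ht0]
      nlinarith [sq_nonneg (t-1)]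
  have h2 := key (Set.self_mem_Ici) (Set.mem_Ici.2 h.le) h
  simp only [Real.log_one] at h2
  norm_num at h2
  linarith

-- (Ld): for 1 ≤ t: log t ≤ (t - 1/t)/2
lemma lem_logt {t : ℝ} (h : 1 ≤ t) : Real.log t ≤ (t - 1/t)/2 := by
  have ht0 : (0:ℝ) < t := by linarith
  rcases eq_or_lt_of_le h with rfl | h'
  · simp
  · have hl : 0 < Real.log t := Real.log_pos h'
    have := Real.self_lt_sinh_iff.mpr hl
    rw [Real.sinh_log ht0] at this
    rw [one_div]
    linarith

-- Pade: for 0 ≤ u: 1 - exp(-u) ≤ 2u/(2+u)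
lemma lem_pade {u : ℝ} (h : 0 ≤ u) : 1 - Real.exp (-u) ≤ 2*u/(2+u) := by
  have key : MonotoneOn (fun v : ℝ => (2+v) * Real.exp (-v) + v - 2) (Set.Ici 0) := by
    apply monotoneOn_of_deriv_nonneg (convex_Ici 0)
    · fun_prop
    · apply DifferentiableOn.sub_const
      apply DifferentiableOn.add
      · exact (differentiable_const _ |>.add differentiable_id).differentiableOn.mul
          (by fun_prop)
      · exact differentiableOn_id
    · intro v hv
      rw [interior_Ici] at hv
      simp only [Set.mem_Ioi] at hv
      have hd : HasDerivAt (fun v : ℝ => (2+v) * Real.exp (-v) + v - 2)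
          ((1 * Real.exp (-v) + (2+v) * (Real.exp (-v) * -1)) + 1) v := by
        have h1 : HasDerivAt (fun v : ℝ => 2+v) 1 v := by
          simpa using (hasDerivAt_id v).const_add 2
        have h2 : HasDerivAt (fun v : ℝ => Real.exp (-v)) (Real.exp (-v) * -1) v := by
          have := (Real.hasDerivAt_exp (-v)).comp v ((hasDerivAt_id v).neg)
          simpa [Function.comp_def] using this
        exact ((h1.mul h2).add (hasDerivAt_id v)).sub_const 2
      rw [hd.deriv]
      have h5 : (1+v) * Real.exp (-v) ≤ 1 := by
        have h6 : 1 + v ≤ Real.exp v := by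
          have := Real.add_one_le_exp v; linarith
        have h7 : Real.exp (-v) = (Real.exp v)⁻¹ := Real.exp_neg v
        calc (1+v) * Real.exp (-v) ≤ Real.exp v * Real.exp (-v) :=
              mul_le_mul_of_nonneg_right h6 (Real.exp_pos _).le
          _ = 1 := by rw [h7]; exact mul_inv_cancel₀ (by positivity)
      nlinarith [Real.exp_pos (-v)]
  have h2 := key (Set.self_mem_Ici) (Set.mem_Ici.2 h) h
  norm_num at h2
  have h3 : (0:ℝ) < 2 + u := by linarith
  rw [le_div_iff₀ h3]
  nlinarith [h2]



lemma lem_quad {a z : ℝ} (ha : 1/2 ≤ a) (hz : 1/2 ≤ z) :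
    Real.log a + ((z-a)/a - (z-a)^2/a) ≤ Real.log z := by
  have ha0 : (0:ℝ) < a := by linarith
  set f : ℝ → ℝ := fun z => Real.log z - (z-a)/a + (z-a)^2/a with hf
  have hderiv : ∀ t : ℝ, 0 < t → HasDerivAt f (1/t - 1/a + (2*(t-a))/a) t := by
    intro t ht
    have h1 : HasDerivAt Real.log (1/t) t := by
      simpa [one_div] using Real.hasDerivAt_log (ne_of_gt ht)
    have h2 : HasDerivAt (fun t : ℝ => (t-a)/a) (1/a) t := by
      simpa using (((hasDerivAt_id t).sub_const a).div_const a)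
    have h3 : HasDerivAt (fun t : ℝ => (t-a)^2/a) (2*(t-a)/a) t := by
      have := (((hasDerivAt_id t).sub_const a).pow 2).div_const a
      simpa [mul_comm] using this
    exact (h1.sub h2).add h3
  have key : f a ≤ f z := by
    rcases le_total z a with hza | haz
    · -- z ≤ a : f antitone on [1/2, a]
      have anti : AntitoneOn f (Set.Icc (1/2) a) := by
        apply antitoneOn_of_deriv_nonpos (convex_Icc _ _)
        · intro t ht
          simp only [Set.mem_Icc] at ht
          have ht0 : (0:ℝ) < t := by linarith [ht.1]
          exact ((hderiv t ht0).continuousAt).continuousWithinAt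
        · intro t ht
          rw [interior_Icc] at ht
          have ht0 : (0:ℝ) < t := by linarith [ht.1]
          exact (hderiv t ht0).differentiableAt.differentiableWithinAt
        · intro t ht
          rw [interior_Icc] at ht
          obtain ⟨ht1, ht2⟩ := ht
          have ht0 : (0:ℝ) < t := by linarith
          rw [(hderiv t ht0).deriv]
          have he : 1/t - 1/a + 2*(t-a)/a = (t-a)*(2*t-1)/(t*a) := by
            field_simp; ring
          rw [he]
          apply div_nonpos_of_nonpos_of_nonneg
          · apply mul_nonpos_of_nonpos_of_nonneg <;> linarith
          · positivity
      exact anti ⟨hz, hza⟩ ⟨by linarith, le_refl a⟩ hza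
    · have mono : MonotoneOn f (Set.Ici a) := by
        apply monotoneOn_of_deriv_nonneg (convex_Ici _)
        · intro t ht
          simp only [Set.mem_Ici] at ht
          have ht0 : (0:ℝ) < t := by linarith
          exact ((hderiv t ht0).continuousAt).continuousWithinAt
        · intro t ht
          rw [interior_Ici] at ht
          have ht0 : (0:ℝ) < t := by linarith [Set.mem_Ioi.1 ht]
          exact (hderiv t ht0).differentiableAt.differentiableWithinAt
        · intro t ht
          rw [interior_Ici] at ht
          have ht2 := Set.mem_Ioi.1 ht
          have ht0 : (0:ℝ) < t := by linarith
          rw [(hderiv t ht0).deriv]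
          have he : 1/t - 1/a + 2*(t-a)/a = (t-a)*(2*t-1)/(t*a) := by
            field_simp; ring
          rw [he]
          apply div_nonneg _ (by positivity)
          apply mul_nonneg <;> linarith
      exact mono (Set.self_mem_Ici) (Set.mem_Ici.2 haz) haz
  have hfa : f a = Real.log a := by simp [hf]
  rw [hfa] at key
  simp only [hf] at key
  linarith

lemma amgm_strict {n : ℕ} (hn : 0 < n) (y : Fin n → ℝ) (hy : ∀ i, 0 < y i)
    (hne : ∃ i j, y i ≠ y j) :
    (∏ i, y i) ^ ((1:ℝ)/n) < (∑ i, y i)/n := by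
  have hn' : (n:ℝ) ≠ 0 := Nat.cast_ne_zero.2 hn.ne'
  have hprod : 0 < ∏ i, y i := Finset.prod_pos (fun i _ => hy i)
  have hsum : 0 < ∑ i, y i := Finset.sum_pos (fun i _ => hy i) ⟨⟨0, hn⟩, mem_univ _⟩
  have hw : ∑ _i : Fin n, (1/n : ℝ) = 1 := by
    rw [Finset.sum_const, card_univ, Fintype.card_fin, nsmul_eq_mul]
    field_simp
  obtain ⟨i0, j0, hij⟩ := hne
  have key := strictConcaveOn_log_Ioi.lt_map_sum (w := fun _ : Fin n => (1/n : ℝ))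
    (p := y) (t := univ) (fun i _ => by positivity) hw (fun i _ => hy i)
    ⟨i0, mem_univ _, j0, mem_univ _, hij⟩
  simp only [smul_eq_mul] at key
  have hLHS : ∑ i, (1/n : ℝ) * Real.log (y i) = Real.log ((∏ i, y i) ^ ((1:ℝ)/n)) := by
    rw [Real.log_rpow hprod, ← Finset.mul_sum,
      ← Real.log_prod (s := univ) (f := y) (fun i _ => (hy i).ne')]
  have hRHS : ∑ i, (1/n : ℝ) * y i = (∑ i, y i)/n := by
    rw [← Finset.mul_sum]; ring
  rw [hLHS, hRHS] at key
  have hG : 0 < (∏ i, y i) ^ ((1:ℝ)/n) := Real.rpow_pos_of_pos hprod _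
  exact (Real.log_lt_log_iff hG (by positivity)).1 key

lemma need2 {n : ℕ} (hn : 0 < n) (z : Fin n → ℝ) (hz : ∀ i, 1/2 ≤ z i) :
    (∑ i, z i)/n - (∏ i, z i) ^ ((1:ℝ)/n) ≤
      2*((∑ i, z i)/n)*((∑ i, (z i)^2)/n - ((∑ i, z i)/n)^2) /
        (2*((∑ i, z i)/n) + ((∑ i, (z i)^2)/n - ((∑ i, z i)/n)^2)) := by
  have hn' : (n:ℝ) ≠ 0 := Nat.cast_ne_zero.2 hn.ne'
  have hn0 : (0:ℝ) < n := by positivity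
  set a := (∑ i, z i)/n with ha_def
  set v := (∑ i, (z i)^2)/n - a^2 with hv_def
  have hz0 : ∀ i, 0 < z i := fun i => lt_of_lt_of_le (by norm_num) (hz i)
  have hprod : 0 < ∏ i, z i := Finset.prod_pos (fun i _ => hz0 i)
  have ha : 1/2 ≤ a := by
    rw [ha_def, le_div_iff₀ hn0]
    calc 1/2 * n = ∑ _i : Fin n, (1/2 : ℝ) := by
          rw [Finset.sum_const, card_univ, Fintype.card_fin, nsmul_eq_mul]; ring
      _ ≤ ∑ i, z i := Finset.sum_le_sum (fun i _ => hz i)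
  have ha0 : 0 < a := by linarith
  have hvsum : ∑ i, (z i - a)^2 = n * v := by
    calc ∑ i, (z i - a)^2 = ∑ i, ((z i)^2 - 2*a*(z i) + a^2) := by
          apply Finset.sum_congr rfl; intros; ring
      _ = (∑ i, (z i)^2) - 2*a*(∑ i, z i) + n*a^2 := by
          rw [Finset.sum_add_distrib, Finset.sum_sub_distrib, ← Finset.mul_sum, Finset.sum_const,
            card_univ, Fintype.card_fin, nsmul_eq_mul]
      _ = n*v := by
          rw [hv_def, ha_def]; field_simp; ring
  have hv0 : 0 ≤ v := by
    have h1 : 0 ≤ ∑ i, (z i - a)^2 := Finset.sum_nonneg (fun i _ => sq_nonneg _)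
    rw [hvsum] at h1
    nlinarith
  -- pointwise bound summed
  have hkey : Real.log a - v/a ≤ Real.log ((∏ i, z i) ^ ((1:ℝ)/n)) := by
    have hpt : ∀ i, Real.log a + ((z i - a)/a - (z i - a)^2/a) ≤ Real.log (z i) :=
      fun i => lem_quad ha (hz i)
    have hsump := Finset.sum_le_sum (fun i (_ : i ∈ univ) => hpt i)
    have hzero : ∑ i, (z i - a) = 0 := by
      rw [Finset.sum_sub_distrib, Finset.sum_const, card_univ, Fintype.card_fin, nsmul_eq_mul,
        ha_def]
      field_simp
      ring
    have hLsum : ∑ i, (Real.log a + ((z i - a)/a - (z i - a)^2/a)) =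
        n * Real.log a + (0/a - (n*v)/a) := by
      rw [Finset.sum_add_distrib, Finset.sum_sub_distrib, ← Finset.sum_div, ← Finset.sum_div,
        hzero, hvsum, Finset.sum_const, card_univ, Fintype.card_fin, nsmul_eq_mul]
    have hRsum : ∑ i, Real.log (z i) = n * Real.log ((∏ i, z i) ^ ((1:ℝ)/n)) := by
      rw [Real.log_rpow hprod, ← Real.log_prod (s := univ) (f := z) (fun i _ => (hz0 i).ne')]
      field_simp
    rw [hLsum, hRsum] at hsump
    have : n * (Real.log a - v/a) ≤ n * Real.log ((∏ i, z i) ^ ((1:ℝ)/n)) := by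
      rw [mul_sub]
      calc (n:ℝ) * Real.log a - n * (v/a) = n * Real.log a + (0/a - (n*v)/a) := by
            field_simp; ring
        _ ≤ _ := hsump
    exact le_of_mul_le_mul_left (by linarith [this]) hn0
  -- exponentiate
  have hG : 0 < (∏ i, z i) ^ ((1:ℝ)/n) := Real.rpow_pos_of_pos hprod _
  have hexp : a * Real.exp (-(v/a)) ≤ (∏ i, z i) ^ ((1:ℝ)/n) := by
    have := Real.exp_le_exp.2 hkey
    rw [Real.exp_log hG] at this
    calc a * Real.exp (-(v/a)) = Real.exp (Real.log a - v/a) := by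
          rw [Real.exp_sub, Real.exp_log ha0, Real.exp_neg]; ring
      _ ≤ _ := this
  have hpade := lem_pade (u := v/a) (by positivity)
  -- a - G ≤ a(1 - exp(-(v/a))) ≤ a * (2(v/a)/(2+v/a)) = 2av/(2a+v)
  have h2 : a - (∏ i, z i) ^ ((1:ℝ)/n) ≤ a * (2*(v/a)/(2+v/a)) := by
    have h3 : a * (1 - Real.exp (-(v/a))) ≤ a * (2*(v/a)/(2+v/a)) :=
      mul_le_mul_of_nonneg_left hpade ha0.le
    nlinarith [hexp]
  have heq : a * (2*(v/a)/(2+v/a)) = 2*a*v/(2*a+v) := by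
    have h4 : 2*a + v > 0 := by linarith
    field_simp
  rw [heq] at h2
  exact h2


lemma sum_update2 {n : ℕ} (v : Fin n → ℝ) {i j : Fin n} (hij : i ≠ j) (a b : ℝ) (F : ℝ → ℝ) :
    ∑ k, F (Function.update (Function.update v i a) j b k)
      = ∑ k, F (v k) - F (v i) - F (v j) + F a + F b := by
  classical
  have hmem : i ∈ univ.erase j := Finset.mem_erase.2 ⟨hij, mem_univ i⟩
  have h1 : ∀ k, F (Function.update (Function.update v i a) j b k)
      = Function.update (Function.update (fun k => F (v k)) i (F a)) j (F b) k := by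
    intro k
    by_cases hk : k = j
    · subst hk; simp
    · by_cases hk2 : k = i
      · subst hk2
        rw [Function.update_of_ne hk, Function.update_self, Function.update_of_ne hk,
          Function.update_self]
      · rw [Function.update_of_ne hk, Function.update_of_ne hk2, Function.update_of_ne hk,
          Function.update_of_ne hk2]
  rw [Finset.sum_congr rfl (fun k _ => h1 k)]
  rw [Finset.sum_update_of_mem (mem_univ j)]
  simp only [Finset.sdiff_singleton_eq_erase]
  rw [Finset.sum_update_of_mem hmem]
  simp only [Finset.sdiff_singleton_eq_erase]
  have e1 : ∑ k, F (v k) = F (v j) + ∑ k ∈ univ.erase j, F (v k) :=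
    (Finset.add_sum_erase univ (fun k => F (v k)) (mem_univ j)).symm
  have e2 : ∑ k ∈ univ.erase j, F (v k) = F (v i) + ∑ k ∈ (univ.erase j).erase i, F (v k) :=
    (Finset.add_sum_erase _ (fun k => F (v k)) hmem).symm
  rw [e1, e2]; ring

lemma prod_update2 {n : ℕ} (v : Fin n → ℝ) {i j : Fin n} (hij : i ≠ j) (a b : ℝ) :
    (∏ k, Function.update (Function.update v i a) j b k) * (v i * v j)
      = (∏ k, v k) * (a * b) := by
  classical
  have hmem : i ∈ univ.erase j := Finset.mem_erase.2 ⟨hij, mem_univ i⟩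
  have h1 : ∀ k, Function.update (Function.update v i a) j b k
      = Function.update (Function.update v i a) j b k := fun _ => rfl
  rw [Finset.prod_update_of_mem (mem_univ j)]
  simp only [Finset.sdiff_singleton_eq_erase]
  rw [Finset.prod_update_of_mem hmem]
  simp only [Finset.sdiff_singleton_eq_erase]
  have e1 : ∏ k, v k = v j * ∏ k ∈ univ.erase j, v k :=
    (Finset.mul_prod_erase univ v (mem_univ j)).symm
  have e2 : ∏ k ∈ univ.erase j, v k = v i * ∏ k ∈ (univ.erase j).erase i, v k :=
    (Finset.mul_prod_erase _ v hmem).symm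
  rw [e1, e2]; ring

lemma aux_fin {n S Q E F : ℝ} (hn0 : 0 < n)
    (hpoly : (S-E)*n - (Q-F)*n + (S-E)^2 < S*n - Q*n + S^2) :
    (S-E)/n - ((Q-F)/n - ((S-E)/n)^2) < S/n - (Q/n - (S/n)^2) := by
  have heq : (S/n - (Q/n - (S/n)^2)) - ((S-E)/n - ((Q-F)/n - ((S-E)/n)^2))
      = ((S*n - Q*n + S^2) - ((S-E)*n - (Q-F)*n + (S-E)^2))/n^2 := by
    field_simp
    ring
  have hpos : (0:ℝ) < ((S*n - Q*n + S^2) - ((S-E)*n - (Q-F)*n + (S-E)^2))/n^2 :=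
    div_pos (by linarith) (by positivity)
  linarith

lemma need1 {n : ℕ} (hn : 0 < n) (y : Fin n → ℝ) (hy : ∀ i, y i ∈ Set.Icc (0:ℝ) (1/2)) :
    (∑ i, (y i)^2)/n - ((∑ i, y i)/n)^2 ≤ (∑ i, y i)/n - (∏ i, y i) ^ ((1:ℝ)/n) := by
  have hn' : (n:ℝ) ≠ 0 := Nat.cast_ne_zero.2 hn.ne'
  have hn0 : (0:ℝ) < n := by positivity
  have hn1 : (1:ℝ) ≤ n := by exact_mod_cast hn
  set Φ : (Fin n → ℝ) → ℝ := fun u =>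
    (∑ i, u i)/n - (∏ i, u i) ^ ((1:ℝ)/n) - ((∑ i, (u i)^2)/n - ((∑ i, u i)/n)^2) with hΦ
  set S : Set (Fin n → ℝ) := Set.Icc 0 (fun _ => (1/2:ℝ)) with hS
  have hmemS : ∀ u : Fin n → ℝ, u ∈ S ↔ ∀ i, 0 ≤ u i ∧ u i ≤ 1/2 := by
    intro u
    constructor
    · rintro ⟨h1, h2⟩ i; exact ⟨h1 i, h2 i⟩
    · intro h; exact ⟨fun i => (h i).1, fun i => (h i).2⟩
  have hyS : y ∈ S := (hmemS y).2 (fun i => ⟨(hy i).1, (hy i).2⟩)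
  have hcomp : IsCompact S := isCompact_Icc
  have hcont : Continuous Φ := by
    apply Continuous.sub
    apply Continuous.sub
    · exact (continuous_finset_sum _ (fun i _ => continuous_apply i)).div_const _
    · exact (Real.continuous_rpow_const (by positivity)).comp
        (continuous_finset_prod _ (fun i _ => continuous_apply i))
    · apply Continuous.sub
      · exact (continuous_finset_sum _ (fun i _ => (continuous_apply i).pow 2)).div_const _
      · exact (((continuous_finset_sum _ (fun i _ => continuous_apply i)).div_const _).pow 2)
  obtain ⟨w, hwS, hwmin⟩ := hcomp.exists_isMinOn ⟨y, hyS⟩ hcont.continuousOn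
  have hw := (hmemS w).1 hwS
  suffices h0 : 0 ≤ Φ w by
    have h1 : Φ w ≤ Φ y := hwmin hyS
    have h2 : 0 ≤ Φ y := le_trans h0 h1
    rw [hΦ] at h2
    simp only at h2
    linarith
  by_cases hzero : ∃ i, w i = 0
  · obtain ⟨i0, hi0⟩ := hzero
    have hprod : ∏ i, w i = 0 := Finset.prod_eq_zero (mem_univ i0) hi0
    have hq : ∑ i, (w i)^2 ≤ (1/2) * ∑ i, w i := by
      rw [Finset.mul_sum]
      apply Finset.sum_le_sum
      intro k _
      have := hw k
      nlinarith [this.1, this.2]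
    have hsumnn : 0 ≤ ∑ i, w i := Finset.sum_nonneg (fun k _ => (hw k).1)
    rw [hΦ]
    simp only [hprod]
    rw [Real.zero_rpow (by positivity : (0:ℝ) < 1/(n:ℝ)).ne']
    have h3 : (∑ i, (w i)^2)/n ≤ (1/2) * ((∑ i, w i)/n) := by
      rw [div_le_iff₀ hn0]
      calc (∑ i, (w i)^2) ≤ (1/2) * ∑ i, w i := hq
        _ = 1/2 * ((∑ i, w i) / n) * n := by field_simp
    have h4 : 0 ≤ (∑ i, w i)/n := by positivity
    nlinarith [sq_nonneg ((∑ i, w i)/n)]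
  · push_neg at hzero
    have hwpos : ∀ i, 0 < w i := fun i => lt_of_le_of_ne (hw i).1 (Ne.symm (hzero i))
    by_cases heq : ∀ i k, w i = w k
    · -- all equal: Φ w = 0
      have i0 : Fin n := ⟨0, hn⟩
      set c := w i0 with hc
      have hc0 : 0 < c := hwpos i0
      have hsum : ∑ i, w i = n * c := by
        rw [Finset.sum_congr rfl (fun k _ => heq k i0)]
        rw [Finset.sum_const, card_univ, Fintype.card_fin, nsmul_eq_mul]
      have hsumsq : ∑ i, (w i)^2 = n * c^2 := by
        rw [Finset.sum_congr rfl (fun k _ => by rw [heq k i0])]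
        rw [Finset.sum_const, card_univ, Fintype.card_fin, nsmul_eq_mul]
      have hprodc : ∏ i, w i = c ^ (n:ℕ) := by
        rw [Finset.prod_congr rfl (fun k _ => heq k i0)]
        rw [Finset.prod_const, card_univ, Fintype.card_fin]
      have hrpow : (∏ i, w i) ^ ((1:ℝ)/n) = c := by
        rw [hprodc, ← Real.rpow_natCast c n, ← Real.rpow_mul hc0.le]
        rw [mul_one_div_cancel hn', Real.rpow_one]
      rw [hΦ]
      simp only [hrpow, hsum, hsumsq]
      field_simp
      simp
    · push_neg at heq
      obtain ⟨a0, b0, hab⟩ := heq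
      exfalso
      -- max and min
      obtain ⟨i, _, hiM⟩ := Finset.exists_max_image univ w ⟨a0, mem_univ a0⟩
      obtain ⟨j, _, hjm⟩ := Finset.exists_min_image univ w ⟨a0, mem_univ a0⟩
      set M := w i with hM
      set μ := w j with hμ
      have hμM : μ < M := by
        rcases lt_or_ge μ M with h | h
        · exact h
        · exfalso
          apply hab
          have h1 : ∀ k, w k = μ := by
            intro k
            have := hjm k (mem_univ k)
            have := hiM k (mem_univ k)
            have : w k ≤ M := hiM k (mem_univ k)
            have : μ ≤ w k := hjm k (mem_univ k)
            linarith [hiM k (mem_univ k), hjm k (mem_univ k)]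
          rw [h1 a0, h1 b0]
      have hij : i ≠ j := by
        intro h; rw [hM, hμ, h] at hμM; exact lt_irrefl _ hμM
      have hμ0 : 0 < μ := hwpos j
      have hM12 : M ≤ 1/2 := (hw i).2
      set g := Real.sqrt (M*μ) with hg
      have hMμ0 : 0 < M*μ := mul_pos (lt_trans hμ0 hμM) hμ0
      have hg0 : 0 < g := Real.sqrt_pos.2 hMμ0
      have hg2 : g^2 = M*μ := Real.sq_sqrt hMμ0.le
      have hgμ : μ ≤ g := by nlinarith
      have hgM : g ≤ M := by nlinarith
      have h2g : 2*g < M + μ := by nlinarith [sq_nonneg (M - μ)]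
      set y' := Function.update (Function.update w i g) j g with hy'
      have hy'S : y' ∈ S := by
        rw [hmemS]
        intro k
        rw [hy']
        by_cases hk : k = j
        · subst hk; rw [Function.update_self]; constructor <;> linarith
        · rw [Function.update_of_ne hk]
          by_cases hk2 : k = i
          · subst hk2; rw [Function.update_self]; constructor <;> linarith
          · rw [Function.update_of_ne hk2]; exact ⟨(hw k).1, (hw k).2⟩
      have hgg : g*g = M*μ := by rw [← sq]; exact hg2
      have hprodeq : ∏ k, y' k = ∏ k, w k := by
        have h5 := prod_update2 w hij g g
        rw [← hy', ← hM, ← hμ, hgg] at h5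
        exact mul_right_cancel₀ hMμ0.ne' h5
      have hsum1 : ∑ k, y' k = ∑ k, w k - M - μ + 2*g := by
        have h5 := sum_update2 w hij g g (fun t => t)
        rw [← hy', ← hM, ← hμ] at h5
        rw [h5]; ring
      have hsum2 : ∑ k, (y' k)^2 = ∑ k, (w k)^2 - M^2 - μ^2 + 2*g^2 := by
        have h5 := sum_update2 w hij g g (fun t => t^2)
        rw [← hy', ← hM, ← hμ] at h5
        rw [h5]; ring
      have hcard : ((univ.erase i).card : ℝ) = (n:ℝ) - 1 := by
        rw [Finset.card_erase_of_mem (mem_univ i), card_univ, Fintype.card_fin,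
          Nat.cast_sub hn, Nat.cast_one]
      have hslb : M + ((n:ℝ)-1)*μ ≤ ∑ k, w k := by
        have h5 : ∑ _k ∈ univ.erase i, μ ≤ ∑ k ∈ univ.erase i, w k :=
          Finset.sum_le_sum (fun k _ => hjm k (mem_univ k))
        rw [Finset.sum_const, nsmul_eq_mul, hcard] at h5
        have h6 : ∑ k, w k = w i + ∑ k ∈ univ.erase i, w k :=
          (Finset.add_sum_erase univ w (mem_univ i)).symm
        rw [h6, ← hM]
        linarith
      set s := ∑ k, w k with hs_def
      set q := ∑ k, (w k)^2 with hq_def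
      have he0 : (0:ℝ) < M + μ - 2*g := by linarith
      have hb : (n:ℝ)*(M+μ+2*g) - n - 2*s + (M+μ-2*g) < 0 := by
        have hA : (n:ℝ)*(2*g) ≤ n*(M+μ) := by
          apply mul_le_mul_of_nonneg_left h2g.le hn0.le
        have hB : (n:ℝ)*(2*M) ≤ n*1 := by
          apply mul_le_mul_of_nonneg_left (by linarith) hn0.le
        nlinarith
      have hg2n : (n:ℝ)*(g^2) = n*(M*μ) := by rw [hg2]
      have hpoly : (s-(M+μ-2*g))*n - (q-(M^2+μ^2-2*g^2))*n + (s-(M+μ-2*g))^2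
          < s*n - q*n + s^2 := by
        have hdiff : ((s-(M+μ-2*g))*n - (q-(M^2+μ^2-2*g^2))*n + (s-(M+μ-2*g))^2)
            - (s*n - q*n + s^2)
            = (M+μ-2*g)*((n:ℝ)*(M+μ+2*g) - n - 2*s + (M+μ-2*g))
              + 2*((n:ℝ)*g^2 - n*(M*μ)) := by ring
        have h7 := mul_neg_of_pos_of_neg he0 hb
        linarith [hdiff, hg2n, h7]
      have hfin := aux_fin hn0 hpoly
      have hΦy' : Φ y' < Φ w := by
        simp only [hΦ]
        rw [hsum1, hsum2, hprodeq, ← hs_def, ← hq_def]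
        clear_value s q M μ g y'
        have hfin2 := hfin
        ring_nf at hfin2 ⊢
        linarith [hfin2]
      exact absurd (hwmin hy'S) (not_le.2 hΦy')


set_option maxHeartbeats 1000000 in
theorem stmt19 (n : ℕ) (hn : 1 ≤ n) (x : Fin n → ℝ)
    (hx : ∀ i, x i ∈ Set.Ioc (0 : ℝ) (1 / 2))
    (hne : ¬∀ i j, x i = x j) :
    let A := (∑ i, x i) / n
    let G := (∏ i, x i) ^ ((1 : ℝ) / n)
    let A' := (∑ i, (1 - x i)) / n
    let G' := (∏ i, (1 - x i)) ^ ((1 : ℝ) / n)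
    (A' / G') ^ (A' + G') < (A / G) ^ (A + G) ∧
    (A' / G') ^ (A - G) < (A / G) ^ (A' - G') := by
  intro A G A' G'
  push_neg at hne
  obtain ⟨i0, j0, hij⟩ := hne
  have hn0 : 0 < n := hn
  have hn' : (n:ℝ) ≠ 0 := Nat.cast_ne_zero.2 hn0.ne'
  have hnR : (0:ℝ) < n := by positivity
  have hxpos : ∀ i, 0 < x i := fun i => (hx i).1
  have hxle : ∀ i, x i ≤ 1/2 := fun i => (hx i).2
  set z : Fin n → ℝ := fun i => 1 - x i with hz_def
  have hzge : ∀ i, 1/2 ≤ z i := fun i => by simp [hz_def]; linarith [hxle i]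
  have hzpos : ∀ i, 0 < z i := fun i => lt_of_lt_of_le (by norm_num) (hzge i)
  have hzne : z i0 ≠ z j0 := by simp [hz_def]; exact hij
  -- basic defs
  have hAdef : A = (∑ i, x i)/(n:ℝ) := rfl
  have hGdef : G = (∏ i, x i) ^ ((1:ℝ)/n) := rfl
  have hA'def : A' = (∑ i, z i)/(n:ℝ) := rfl
  have hG'def : G' = (∏ i, z i) ^ ((1:ℝ)/n) := rfl
  clear_value z
  clear_value A G A' G'
  have hprodx : 0 < ∏ i, x i := Finset.prod_pos (fun i _ => hxpos i)
  have hprodz : 0 < ∏ i, z i := Finset.prod_pos (fun i _ => hzpos i)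
  have hG0 : 0 < G := by rw [hGdef]; exact Real.rpow_pos_of_pos hprodx _
  have hG'0 : 0 < G' := by rw [hG'def]; exact Real.rpow_pos_of_pos hprodz _
  have hA0 : 0 < A := by
    rw [hAdef]; exact div_pos (Finset.sum_pos (fun i _ => hxpos i) ⟨i0, mem_univ _⟩) hnR
  -- strict AM-GM
  have hAG : G < A := by
    rw [hAdef, hGdef]; exact amgm_strict hn0 x hxpos ⟨i0, j0, hij⟩
  have hA'G' : G' < A' := by
    rw [hA'def, hG'def]; exact amgm_strict hn0 z hzpos ⟨i0, j0, hzne⟩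
  -- A' = 1 - A
  have hsum_z : ∑ i, z i = n - ∑ i, x i := by
    simp only [hz_def]
    rw [Finset.sum_sub_distrib, Finset.sum_const, card_univ, Fintype.card_fin, nsmul_eq_mul,
      mul_one]
  have hA'A : A' = 1 - A := by
    rw [hA'def, hAdef, hsum_z]; field_simp
  -- A < 1/2 strictly
  have hA12 : A < 1/2 := by
    have hex : ∃ k, x k < 1/2 := by
      by_contra hcon
      push_neg at hcon
      have h1 : x i0 = 1/2 := le_antisymm (hxle i0) (hcon i0)
      have h2 : x j0 = 1/2 := le_antisymm (hxle j0) (hcon j0)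
      exact hij (h1.trans h2.symm)
    obtain ⟨k0, hk0⟩ := hex
    have hlt : ∑ i, x i < ∑ _i : Fin n, (1/2:ℝ) :=
      Finset.sum_lt_sum (fun i _ => hxle i) ⟨k0, mem_univ _, hk0⟩
    rw [Finset.sum_const, card_univ, Fintype.card_fin, nsmul_eq_mul] at hlt
    rw [hAdef, div_lt_iff₀ hnR]
    linarith
  have hA'0 : 0 < A' := by rw [hA'A]; linarith
  have hA'1 : A' < 1 := by rw [hA'A]; linarith
  -- G' ≥ 1/2
  have hG'half : 1/2 ≤ G' := by
    have h1 : ((1:ℝ)/2)^(n:ℕ) ≤ ∏ i, z i := by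
      calc ((1:ℝ)/2)^(n:ℕ) = ∏ _i : Fin n, (1/2:ℝ) := by
            rw [Finset.prod_const, card_univ, Fintype.card_fin]
        _ ≤ ∏ i, z i := Finset.prod_le_prod (fun i _ => by norm_num) (fun i _ => hzge i)
    have h2 : (((1:ℝ)/2)^(n:ℕ)) ^ ((1:ℝ)/n) ≤ (∏ i, z i) ^ ((1:ℝ)/n) :=
      Real.rpow_le_rpow (by positivity) h1 (by positivity)
    have h3 : (((1:ℝ)/2)^(n:ℕ)) ^ ((1:ℝ)/n) = 1/2 := by
      rw [← Real.rpow_natCast (1/2 : ℝ) n, ← Real.rpow_mul (by norm_num),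
        mul_one_div_cancel hn', Real.rpow_one]
    rw [hG'def]; rw [h3] at h2; exact h2
  have hAG' : A < G' := lt_of_lt_of_le hA12 hG'half
  -- variance
  set V : ℝ := (∑ i, (x i)^2)/n - A^2 with hV_def
  clear_value V
  have hvar : ∑ i, (x i - A)^2 = n * V := by
    calc ∑ i, (x i - A)^2 = ∑ i, ((x i)^2 - 2*A*(x i) + A^2) := by
          apply Finset.sum_congr rfl; intros; ring
      _ = (∑ i, (x i)^2) - 2*A*(∑ i, x i) + n*A^2 := by
          rw [Finset.sum_add_distrib, Finset.sum_sub_distrib, ← Finset.mul_sum, Finset.sum_const,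
            card_univ, Fintype.card_fin, nsmul_eq_mul]
      _ = n*V := by rw [hV_def, hAdef]; field_simp; ring
  have hV0 : 0 ≤ V := by
    have h1 : 0 ≤ ∑ i, (x i - A)^2 := Finset.sum_nonneg (fun i _ => sq_nonneg _)
    rw [hvar] at h1
    nlinarith
  -- z-side variance equals V
  have hVz : (∑ i, (z i)^2)/(n:ℝ) - A'^2 = V := by
    have h1 : ∑ i, (z i)^2 = n - 2*(∑ i, x i) + ∑ i, (x i)^2 := by
      simp only [hz_def]
      calc ∑ i, (1 - x i)^2 = ∑ i, (1 - 2*(x i) + (x i)^2) := by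
            apply Finset.sum_congr rfl; intros; ring
        _ = n - 2*(∑ i, x i) + ∑ i, (x i)^2 := by
            rw [Finset.sum_add_distrib, Finset.sum_sub_distrib, ← Finset.mul_sum,
              Finset.sum_const, card_univ, Fintype.card_fin, nsmul_eq_mul, mul_one]
    rw [hV_def, h1, hA'A, hAdef]
    field_simp
    ring
  -- Need1 : V ≤ A - G
  have hN1 : V ≤ A - G := by
    have := need1 hn0 x (fun i => ⟨(hxpos i).le, hxle i⟩)
    rw [hV_def, hAdef, hGdef]
    exact this
  -- Need2 : A' - G' ≤ 2A'V/(2A'+V)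
  have hN2 : A' - G' ≤ 2*A'*V/(2*A'+V) := by
    have h1 := need2 hn0 z hzge
    rw [← hA'def, ← hG'def, hVz] at h1
    exact h1
  have h2AV : (0:ℝ) < 2*A' + V := by linarith
  have hVle : A' - G' ≤ V := by
    have h1 : 2*A'*V/(2*A'+V) ≤ V := by
      rw [div_le_iff₀ h2AV]
      nlinarith
    linarith
  have hG'2 : A' - G' ≤ G' := by linarith [hG'half, hA'1]
  have hsq : (A'-G')^2 ≤ 2*G'*V := by
    have h1 : (A'-G')*(A'-G') ≤ G'*V :=
      mul_le_mul hG'2 hVle (by linarith) hG'0.le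
    linarith [h1, mul_nonneg hG'0.le hV0]
  have hprod2 : (A'+G')^2*(A'-G') ≤ 4*A'*G'*V := by
    have hfac : (A'+G')^2 ≤ 2*G'*(2*A'+V) := by linarith [hsq]
    have h1 : (A'+G')^2*(A'-G') ≤ (2*G'*(2*A'+V))*(2*A'*V/(2*A'+V)) := by
      apply mul_le_mul hfac hN2 (by linarith) (by positivity)
    have h2 : (2*G'*(2*A'+V))*(2*A'*V/(2*A'+V)) = 4*A'*G'*V := by
      field_simp
      ring
    linarith [h1, h2.symm.le, h2.le]
  -- bound on (A'+G') log (A'/G')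
  have hL'bound : (A'+G') * Real.log (A'/G') ≤ 2*V := by
    have ht1 : 1 ≤ A'/G' := (one_le_div hG'0).2 hA'G'.le
    have h1 := lem_logt ht1
    have h2 : (A'/G' - 1/(A'/G'))/2 = (A'+G')*(A'-G')/(2*A'*G') := by
      rw [one_div_div]
      field_simp
      ring
    have h3 : (A'+G') * Real.log (A'/G') ≤ (A'+G') * ((A'+G')*(A'-G')/(2*A'*G')) := by
      apply mul_le_mul_of_nonneg_left _ (by linarith)
      rw [← h2]; exact h1
    have h4 : (A'+G') * ((A'+G')*(A'-G')/(2*A'*G')) = (A'+G')^2*(A'-G')/(2*A'*G') := by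
      ring
    have h5 : (A'+G')^2*(A'-G')/(2*A'*G') ≤ 4*A'*G'*V/(2*A'*G') := by
      apply div_le_div_of_nonneg_right hprod2 (by positivity)
    have h6 : 4*A'*G'*V/(2*A'*G') = 2*V := by
      field_simp
      ring
    linarith [h3, h4.le, h5, h6.le]
  -- lower bound on (A+G) log (A/G)
  have hLlower : 2*(A - G) < (A+G) * Real.log (A/G) := by
    have hr : 1 < A/G := (one_lt_div hG0).2 hAG
    have h1 := lem_logr hr
    have h2 : 2*(A/G-1)/(A/G+1) = 2*(A-G)/(A+G) := by
      field_simp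
    rw [h2] at h1
    have hApG : (0:ℝ) < A + G := by linarith
    rw [div_lt_iff₀ hApG] at h1
    linarith
  -- claim 1 combined
  have hclaim1 : (A'+G') * Real.log (A'/G') < (A+G) * Real.log (A/G) := by
    linarith
  -- claim 2
  have hL'ub : Real.log (A'/G') ≤ (A'-G')/G' := by
    have h1 := Real.log_le_sub_one_of_pos (show (0:ℝ) < A'/G' by positivity)
    have h2 : A'/G' - 1 = (A'-G')/G' := by field_simp
    linarith [h1, h2.le]
  have hLlb : (A-G)/A ≤ Real.log (A/G) := by
    have h1 := Real.log_le_sub_one_of_pos (show (0:ℝ) < G/A by positivity)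
    have h2 : Real.log (G/A) = - Real.log (A/G) := by
      rw [← Real.log_inv]
      congr 1
      rw [inv_div]
    rw [h2] at h1
    have h3 : G/A - 1 = -((A-G)/A) := by field_simp; ring
    linarith
  have hclaim2 : (A-G) * Real.log (A'/G') < (A'-G') * Real.log (A/G) := by
    have c1 : (A-G) * Real.log (A'/G') ≤ (A-G) * ((A'-G')/G') :=
      mul_le_mul_of_nonneg_left hL'ub (by linarith)
    have c2 : (A-G) * ((A'-G')/G') = (A-G)*(A'-G')/G' := by ring
    have c3 : (A-G)*(A'-G')/G' < (A-G)*(A'-G')/A := by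
      apply div_lt_div_of_pos_left _ hA0 hAG'
      exact mul_pos (by linarith) (by linarith)
    have c4 : (A-G)*(A'-G')/A = (A'-G') * ((A-G)/A) := by ring
    have c5 : (A'-G') * ((A-G)/A) ≤ (A'-G') * Real.log (A/G) :=
      mul_le_mul_of_nonneg_left hLlb (by linarith)
    linarith [c1, c2.le, c3, c4.le, c5]
  -- final conversion to rpow
  have hb1 : (0:ℝ) < A'/G' := by positivity
  have hb2 : (0:ℝ) < A/G := by positivity
  constructor
  · rw [Real.rpow_def_of_pos hb1, Real.rpow_def_of_pos hb2]
    apply Real.exp_lt_exp.2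
    nlinarith [hclaim1]
  · rw [Real.rpow_def_of_pos hb1, Real.rpow_def_of_pos hb2]
    apply Real.exp_lt_exp.2
    nlinarith [hclaim2]
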